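/- Let G be a finite group, H and N normal subgroups with H ∩ N = {e} and HN = G (a complementary pair), and let A be the direct product supercharacter theory of supercharacter theories A_H on H and A_N on N. Then A is generated by a subgroup of Aut(G) if and only if A_H is generated by a subgroup of Aut(H) and A_N is generated by a subgroup of Aut(N). -/

import Mathlib

/-- The sum `∑_{g ∈ K} g` in the group algebra `ℂ[G]`. -/
noncomputable def classSum {G : Type*} [Group G] [DecidableEq G] (K : Finset G) :
    MonoidAlgebra ℂ G := ∑ g ∈ K, MonoidAlgebra.single g 1

/-- The Hadamard (coefficientwise) product on `ℂ[G]`. -/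
noncomputable def hadamard {G : Type*} [Group G] (a b : MonoidAlgebra ℂ G) :
    MonoidAlgebra ℂ G :=
    MonoidAlgebra.ofCoeff (Finsupp.zipWith (· * ·) (mul_zero 0) a.coeff b.coeff)

/-- A supercharacter theory of a finite group `G`, identified with its superclass
partition `P`: a partition of `G` with `{1} ∈ P`, each part closed under conjugation
(so the part sums lie in `Z(ℂ[G])`), whose `ℂ`-span of part sums contains `Ĝ` and is
closed under the group-algebra product and the Hadamard product. -/
def IsSCT {G : Type*} [Group G] [Fintype G] [DecidableEq G] (P : Finset (Finset G)) : Prop :=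
  (∀ g : G, ∃! K, K ∈ P ∧ g ∈ K) ∧
  ({1} : Finset G) ∈ P ∧
  (∀ K ∈ P, ∀ g ∈ K, ∀ x : G, x * g * x⁻¹ ∈ K) ∧
  classSum (Finset.univ : Finset G) ∈
    Submodule.span ℂ (classSum '' (P : Set (Finset G))) ∧
  (∀ a ∈ Submodule.span ℂ (classSum '' (P : Set (Finset G))),
    ∀ b ∈ Submodule.span ℂ (classSum '' (P : Set (Finset G))),
      a * b ∈ Submodule.span ℂ (classSum '' (P : Set (Finset G)))) ∧
  (∀ a ∈ Submodule.span ℂ (classSum '' (P : Set (Finset G))),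
    ∀ b ∈ Submodule.span ℂ (classSum '' (P : Set (Finset G))),
      hadamard a b ∈ Submodule.span ℂ (classSum '' (P : Set (Finset G))))

/-- A supercharacter theory is generated by automorphisms if its superclasses are
exactly the orbits of a subgroup of `Aut(G)` acting on `G`. -/
def GenByAut {G : Type*} [Group G] [Fintype G] [DecidableEq G]
    (P : Finset (Finset G)) : Prop :=
  ∃ A : Subgroup (MulAut G), ∀ S : Finset G,
    S ∈ P ↔ ∃ g : G, (S : Set G) = MulAction.orbit A g


/-- Restrict an automorphism of `G` preserving a subgroup `H` to an automorphism of `H`. -/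
def restrictAut {G : Type*} [Group G] (H : Subgroup G) (φ : MulAut G)
    (h1 : ∀ x : H, φ x ∈ H) (h2 : ∀ x : H, φ⁻¹ x ∈ H) : MulAut H where
  toFun x := ⟨φ x, h1 x⟩
  invFun x := ⟨φ⁻¹ x, h2 x⟩
  left_inv x := Subtype.ext (MulAut.inv_apply_self G φ x)
  right_inv x := Subtype.ext (MulAut.apply_inv_self G φ x)
  map_mul' x y := Subtype.ext (by simp)

lemma mem_orbit_aut_iff {G : Type*} [Group G] (A : Subgroup (MulAut G)) (g x : G) :
    x ∈ MulAction.orbit A g ↔ ∃ φ ∈ A, φ g = x := by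
  rw [MulAction.mem_orbit_iff]
  constructor
  · rintro ⟨⟨φ, hφ⟩, h⟩; exact ⟨φ, hφ, h⟩
  · rintro ⟨φ, hφ, h⟩; exact ⟨⟨φ, hφ⟩, h⟩

/-- let `H, N` be a complementary pair of normal subgroups of a finite
group `G`, and let `P` be the direct product supercharacter theory of supercharacter
theories `P_H` of `H` and `P_N` of `N` (superclasses `K·L` for `K ∈ P_H`, `L ∈ P_N`).
Then `P` is generated by a subgroup of `Aut(G)` iff `P_H` is generated by a subgroup of
`Aut(H)` and `P_N` is generated by a subgroup of `Aut(N)`. -/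
theorem stmt16 {G : Type*} [Group G] [Fintype G] [DecidableEq G]
    (H N : Subgroup G) [H.Normal] [N.Normal] [Fintype H] [Fintype N] (hinf : H ⊓ N = ⊥) (hsup : H ⊔ N = ⊤)
    (PH : Finset (Finset H)) (PN : Finset (Finset N))
    (hPH : IsSCT PH) (hPN : IsSCT PN)
    (P : Finset (Finset G))
    (hP : P = (PH ×ˢ PN).image (fun q =>
      (q.1 ×ˢ q.2).image (fun x : H × N => (x.1 : G) * (x.2 : G)))) :
    GenByAut P ↔ GenByAut PH ∧ GenByAut PN := by
  have hHN : Disjoint H N := disjoint_iff.mpr hinf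
  have cmm : ∀ (h : H) (n : N), ((h : G) * n = (n : G) * h) := fun h n =>
    Subgroup.commute_of_normal_of_disjoint H N ‹H.Normal› ‹N.Normal› hHN h n h.2 n.2
  -- unique decomposition
  have uniq : ∀ (h1 h2 : H) (n1 n2 : N), ((h1 : G) * n1 = (h2 : G) * n2) →
      h1 = h2 ∧ n1 = n2 := by
    intro h1 h2 n1 n2 heq
    have key : ((h2 : G))⁻¹ * h1 = (n2 : G) * (n1 : G)⁻¹ := by
      rw [inv_mul_eq_iff_eq_mul, ← mul_assoc, ← heq, mul_assoc, mul_inv_cancel, mul_one]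
    have hH1 : ((h2 : G))⁻¹ * h1 ∈ H := mul_mem (inv_mem h2.2) h1.2
    have hN1 : ((h2 : G))⁻¹ * h1 ∈ N := key ▸ mul_mem n2.2 (inv_mem n1.2)
    have : ((h2 : G))⁻¹ * h1 ∈ H ⊓ N := ⟨hH1, hN1⟩
    rw [hinf, Subgroup.mem_bot, inv_mul_eq_one] at this
    have h12 : h1 = h2 := Subtype.ext this.symm
    refine ⟨h12, ?_⟩
    have : (n1 : G) = n2 := by
      subst h12
      exact mul_left_cancel heq
    exact Subtype.ext this
  have surj : ∀ g : G, ∃ (h : H) (n : N), (h : G) * n = g := by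
    intro g
    have hg : g ∈ ((H ⊔ N : Subgroup G) : Set G) := by
      rw [hsup]; trivial
    rw [Subgroup.mul_normal] at hg
    obtain ⟨a, ha, b, hb, hab⟩ := hg
    exact ⟨⟨a, ha⟩, ⟨b, hb⟩, hab⟩
  -- the product map as a monoid hom, and the mul equiv
  let f : H × N →* G := MonoidHom.mk' (fun p => (p.1 : G) * p.2) (by
    intro p q
    simp only [Subgroup.coe_mul, Prod.fst_mul, Prod.snd_mul]
    rw [mul_assoc, ← mul_assoc (q.1 : G), cmm q.1 p.2]
    simp [mul_assoc])
  have finj : Function.Injective f := by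
    intro p q h
    obtain ⟨h1, h2⟩ := uniq p.1 q.1 p.2 q.2 h
    exact Prod.ext h1 h2
  have fsurj : Function.Surjective f := by
    intro g; obtain ⟨h, n, hg⟩ := surj g; exact ⟨(h, n), hg⟩
  let e : (H × N) ≃* G := MulEquiv.ofBijective f ⟨finj, fsurj⟩
  have he : ∀ (h : H) (n : N), e (h, n) = (h : G) * n := fun _ _ => rfl
  -- membership in P
  have memP : ∀ S : Finset G, S ∈ P ↔ ∃ K ∈ PH, ∃ L ∈ PN,
      S = (K ×ˢ L).image (fun x : H × N => (x.1 : G) * (x.2 : G)) := by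
    subst hP
    intro S
    simp only [Finset.mem_image, Finset.mem_product, Prod.exists]
    constructor
    · rintro ⟨K, L, ⟨hK, hL⟩, rfl⟩; exact ⟨K, hK, L, hL, rfl⟩
    · rintro ⟨K, hK, L, hL, rfl⟩; exact ⟨K, L, ⟨hK, hL⟩, rfl⟩
  have memImg : ∀ (K : Finset H) (L : Finset N) (y : G),
      y ∈ (K ×ˢ L).image (fun x : H × N => (x.1 : G) * (x.2 : G)) ↔
        ∃ k ∈ K, ∃ l ∈ L, (k : G) * l = y := by
    intro K L y
    simp only [Finset.mem_image, Finset.mem_product, Prod.exists]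
    constructor
    · rintro ⟨k, l, ⟨hk, hl⟩, rfl⟩; exact ⟨k, hk, l, hl, rfl⟩
    · rintro ⟨k, hk, l, hl, rfl⟩; exact ⟨k, l, ⟨hk, hl⟩, rfl⟩
  -- partition facts
  have partH : ∀ h : H, ∃ K ∈ PH, h ∈ K := by
    intro h; obtain ⟨K, ⟨hK, hh⟩, _⟩ := hPH.1 h; exact ⟨K, hK, hh⟩
  have partN : ∀ n : N, ∃ L ∈ PN, n ∈ L := by
    intro n; obtain ⟨L, ⟨hL, hn⟩, _⟩ := hPN.1 n; exact ⟨L, hL, hn⟩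
  constructor
  · -- from Aut(G) to Aut(H) and Aut(N)
    rintro ⟨A, hA⟩
    have orbH : ∀ (h : H) (K : Finset H), K ∈ PH → h ∈ K →
        MulAction.orbit A (h : G) = ((↑) '' (K : Set H) : Set G) := by
      intro h K hK hh
      have hS : (K ×ˢ ({1} : Finset N)).image (fun x : H × N => (x.1 : G) * (x.2 : G)) ∈ P :=
        (memP _).mpr ⟨K, hK, {1}, hPN.2.1, rfl⟩
      obtain ⟨g₀, hg₀⟩ := (hA _).mp hS
      have hhmem : (h : G) ∈ MulAction.orbit A g₀ := by
        rw [← hg₀]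
        exact Finset.mem_coe.mpr
          ((memImg _ _ _).mpr ⟨h, hh, 1, Finset.mem_singleton_self 1, by simp⟩)
      rw [MulAction.orbit_eq_iff.mpr hhmem, ← hg₀]
      ext y
      rw [Finset.mem_coe, memImg]
      constructor
      · rintro ⟨k, hk, l, hl, rfl⟩
        rw [Finset.mem_singleton] at hl
        subst hl
        exact ⟨k, hk, by simp⟩
      · rintro ⟨k, hk, rfl⟩
        exact ⟨k, hk, 1, Finset.mem_singleton_self 1, by simp⟩
    have orbN : ∀ (n : N) (L : Finset N), L ∈ PN → n ∈ L →
        MulAction.orbit A (n : G) = ((↑) '' (L : Set N) : Set G) := by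
      intro n L hL hn
      have hS : (({1} : Finset H) ×ˢ L).image (fun x : H × N => (x.1 : G) * (x.2 : G)) ∈ P :=
        (memP _).mpr ⟨{1}, hPH.2.1, L, hL, rfl⟩
      obtain ⟨g₀, hg₀⟩ := (hA _).mp hS
      have hnmem : (n : G) ∈ MulAction.orbit A g₀ := by
        rw [← hg₀]
        exact Finset.mem_coe.mpr
          ((memImg _ _ _).mpr ⟨1, Finset.mem_singleton_self 1, n, hn, by simp⟩)
      rw [MulAction.orbit_eq_iff.mpr hnmem, ← hg₀]
      ext y
      rw [Finset.mem_coe, memImg]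
      constructor
      · rintro ⟨k, hk, l, hl, rfl⟩
        rw [Finset.mem_singleton] at hk
        subst hk
        exact ⟨l, hl, by simp⟩
      · rintro ⟨l, hl, rfl⟩
        exact ⟨1, Finset.mem_singleton_self 1, l, hl, by simp⟩
    have presH : ∀ φ ∈ A, ∀ h : H, φ (h : G) ∈ H := by
      intro φ hφ h
      obtain ⟨K, hK, hh⟩ := partH h
      have hmem : φ (h : G) ∈ MulAction.orbit A (h : G) :=
        (mem_orbit_aut_iff A _ _).mpr ⟨φ, hφ, rfl⟩
      rw [orbH h K hK hh] at hmem
      obtain ⟨k, _, hk⟩ := hmem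
      rw [← hk]; exact k.2
    have presN : ∀ φ ∈ A, ∀ n : N, φ (n : G) ∈ N := by
      intro φ hφ n
      obtain ⟨L, hL, hn⟩ := partN n
      have hmem : φ (n : G) ∈ MulAction.orbit A (n : G) :=
        (mem_orbit_aut_iff A _ _).mpr ⟨φ, hφ, rfl⟩
      rw [orbN n L hL hn] at hmem
      obtain ⟨l, _, hl⟩ := hmem
      rw [← hl]; exact l.2
    have genH : GenByAut PH := by
      let AH : Subgroup (MulAut H) :=
        { carrier := {α : MulAut H | ∃ φ ∈ A, ∀ x : H, ((α x : H) : G) = φ x}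
          one_mem' := ⟨1, one_mem A, fun x => by simp⟩
          mul_mem' := by
            rintro α β ⟨φ, hφ, hrel⟩ ⟨ψ, hψ, hrel2⟩
            refine ⟨φ * ψ, mul_mem hφ hψ, fun x => ?_⟩
            rw [MulAut.mul_apply, MulAut.mul_apply, hrel (β x), hrel2 x]
          inv_mem' := by
            rintro α ⟨φ, hφ, hrel⟩
            refine ⟨φ⁻¹, inv_mem hφ, fun x => ?_⟩
            have h1 := hrel (α⁻¹ x)
            rw [MulAut.apply_inv_self] at h1
            rw [h1, MulAut.inv_apply_self] }
      have liftH : ∀ φ ∈ A, ∃ α, α ∈ AH ∧ ∀ x : H, ((α x : H) : G) = φ x := by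
        intro φ hφ
        exact ⟨restrictAut H φ (fun x => presH φ hφ x) (fun x => presH φ⁻¹ (inv_mem hφ) x),
          ⟨φ, hφ, fun x => rfl⟩, fun x => rfl⟩
      have orbAH : ∀ (h x : H), x ∈ MulAction.orbit AH h ↔ (x : G) ∈ MulAction.orbit A (h : G) := by
        intro h x
        rw [mem_orbit_aut_iff, mem_orbit_aut_iff]
        constructor
        · rintro ⟨α, hα, rfl⟩
          obtain ⟨φ, hφ, hrel⟩ := hα
          exact ⟨φ, hφ, (hrel h).symm⟩
        · rintro ⟨φ, hφ, hx⟩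
          obtain ⟨α, hα, hrel⟩ := liftH φ hφ
          exact ⟨α, hα, Subtype.ext (by rw [hrel h, hx])⟩
      refine ⟨AH, fun S => ?_⟩
      constructor
      · intro hS
        have hne : S.Nonempty := by
          rw [Finset.nonempty_iff_ne_empty]
          rintro rfl
          have hemp : (∅ : Finset G) ∈ P := (memP _).mpr ⟨∅, hS, {1}, hPN.2.1, by simp⟩
          obtain ⟨g, hg⟩ := (hA _).mp hemp
          have hgm : g ∈ MulAction.orbit A g := MulAction.mem_orbit_self g
          rw [← hg] at hgm
          simp at hgm
        obtain ⟨h, hh⟩ := hne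
        refine ⟨h, ?_⟩
        ext x
        rw [Finset.mem_coe, orbAH, orbH h S hS hh]
        constructor
        · intro hx; exact ⟨x, hx, rfl⟩
        · rintro ⟨a, ha, hax⟩; exact Subtype.coe_injective hax ▸ ha
      · rintro ⟨h, hSorb⟩
        obtain ⟨K, hK, hh⟩ := partH h
        have hSK : S = K := by
          apply Finset.coe_injective
          rw [hSorb]
          ext x
          rw [orbAH, orbH h K hK hh, Finset.mem_coe]
          constructor
          · rintro ⟨a, ha, hax⟩; exact Subtype.coe_injective hax ▸ ha
          · intro hx; exact ⟨x, hx, rfl⟩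
        rw [hSK]; exact hK
    have genN : GenByAut PN := by
      let AN : Subgroup (MulAut N) :=
        { carrier := {β : MulAut N | ∃ φ ∈ A, ∀ x : N, ((β x : N) : G) = φ x}
          one_mem' := ⟨1, one_mem A, fun x => by simp⟩
          mul_mem' := by
            rintro α β ⟨φ, hφ, hrel⟩ ⟨ψ, hψ, hrel2⟩
            refine ⟨φ * ψ, mul_mem hφ hψ, fun x => ?_⟩
            rw [MulAut.mul_apply, MulAut.mul_apply, hrel (β x), hrel2 x]
          inv_mem' := by
            rintro α ⟨φ, hφ, hrel⟩
            refine ⟨φ⁻¹, inv_mem hφ, fun x => ?_⟩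
            have h1 := hrel (α⁻¹ x)
            rw [MulAut.apply_inv_self] at h1
            rw [h1, MulAut.inv_apply_self] }
      have liftN : ∀ φ ∈ A, ∃ β, β ∈ AN ∧ ∀ x : N, ((β x : N) : G) = φ x := by
        intro φ hφ
        exact ⟨restrictAut N φ (fun x => presN φ hφ x) (fun x => presN φ⁻¹ (inv_mem hφ) x),
          ⟨φ, hφ, fun x => rfl⟩, fun x => rfl⟩
      have orbAN : ∀ (n x : N), x ∈ MulAction.orbit AN n ↔ (x : G) ∈ MulAction.orbit A (n : G) := by
        intro n x
        rw [mem_orbit_aut_iff, mem_orbit_aut_iff]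
        constructor
        · rintro ⟨β, hβ, rfl⟩
          obtain ⟨φ, hφ, hrel⟩ := hβ
          exact ⟨φ, hφ, (hrel n).symm⟩
        · rintro ⟨φ, hφ, hx⟩
          obtain ⟨β, hβ, hrel⟩ := liftN φ hφ
          exact ⟨β, hβ, Subtype.ext (by rw [hrel n, hx])⟩
      refine ⟨AN, fun S => ?_⟩
      constructor
      · intro hS
        have hne : S.Nonempty := by
          rw [Finset.nonempty_iff_ne_empty]
          rintro rfl
          have hemp : (∅ : Finset G) ∈ P := (memP _).mpr ⟨{1}, hPH.2.1, ∅, hS, by simp⟩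
          obtain ⟨g, hg⟩ := (hA _).mp hemp
          have hgm : g ∈ MulAction.orbit A g := MulAction.mem_orbit_self g
          rw [← hg] at hgm
          simp at hgm
        obtain ⟨n, hn⟩ := hne
        refine ⟨n, ?_⟩
        ext x
        rw [Finset.mem_coe, orbAN, orbN n S hS hn]
        constructor
        · intro hx; exact ⟨x, hx, rfl⟩
        · rintro ⟨a, ha, hax⟩; exact Subtype.coe_injective hax ▸ ha
      · rintro ⟨n, hSorb⟩
        obtain ⟨L, hL, hn⟩ := partN n
        have hSL : S = L := by
          apply Finset.coe_injective
          rw [hSorb]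
          ext x
          rw [orbAN, orbN n L hL hn, Finset.mem_coe]
          constructor
          · rintro ⟨a, ha, hax⟩; exact Subtype.coe_injective hax ▸ ha
          · intro hx; exact ⟨x, hx, rfl⟩
        rw [hSL]; exact hL
    exact ⟨genH, genN⟩
  · -- from Aut(H) and Aut(N) to Aut(G)
    rintro ⟨⟨AH, hAH⟩, ⟨AN, hAN⟩⟩
    have orbKH : ∀ K ∈ PH, ∀ h ∈ K, (K : Set H) = MulAction.orbit AH h := by
      intro K hK h hh
      obtain ⟨h₀, h0⟩ := (hAH K).mp hK
      have hmem : h ∈ MulAction.orbit AH h₀ := h0 ▸ Finset.mem_coe.mpr hh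
      rw [h0]
      exact (MulAction.orbit_eq_iff.mpr hmem).symm
    have orbKN : ∀ L ∈ PN, ∀ n ∈ L, (L : Set N) = MulAction.orbit AN n := by
      intro L hL n hn
      obtain ⟨n₀, h0⟩ := (hAN L).mp hL
      have hmem : n ∈ MulAction.orbit AN n₀ := h0 ▸ Finset.mem_coe.mpr hn
      rw [h0]
      exact (MulAction.orbit_eq_iff.mpr hmem).symm
    let A : Subgroup (MulAut G) :=
      { carrier := {φ : MulAut G | ∃ α ∈ AH, ∃ β ∈ AN,
          ∀ (h : H) (n : N), φ ((h : G) * n) = ((α h : H) : G) * ((β n : N) : G)}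
        one_mem' := ⟨1, one_mem AH, 1, one_mem AN, fun h n => by simp⟩
        mul_mem' := by
          rintro φ ψ ⟨α, hα, β, hβ, hrel⟩ ⟨α2, hα2, β2, hβ2, hrel2⟩
          refine ⟨α * α2, mul_mem hα hα2, β * β2, mul_mem hβ hβ2, fun h n => ?_⟩
          rw [MulAut.mul_apply, hrel2 h n, hrel (α2 h) (β2 n), MulAut.mul_apply,
            MulAut.mul_apply]
        inv_mem' := by
          rintro φ ⟨α, hα, β, hβ, hrel⟩
          refine ⟨α⁻¹, inv_mem hα, β⁻¹, inv_mem hβ, fun h n => ?_⟩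
          have h1 := hrel (α⁻¹ h) (β⁻¹ n)
          rw [MulAut.apply_inv_self, MulAut.apply_inv_self] at h1
          rw [← h1, MulAut.inv_apply_self] }
    have lift : ∀ (α : MulAut H) (β : MulAut N), ∃ φ : MulAut G,
        ∀ (h : H) (n : N), φ ((h : G) * n) = ((α h : H) : G) * ((β n : N) : G) := by
      intro α β
      refine ⟨(e.symm.trans ((α.prodCongr β).trans e)), fun h n => ?_⟩
      have h1 : e.symm ((h : G) * n) = (h, n) := by
        apply e.injective
        rw [MulEquiv.apply_symm_apply]
        rfl
      rw [MulEquiv.trans_apply, MulEquiv.trans_apply, h1]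
      rfl
    have orbProd : ∀ (h : H) (n : N) (K : Finset H) (L : Finset N),
        (K : Set H) = MulAction.orbit AH h → (L : Set N) = MulAction.orbit AN n →
        (((K ×ˢ L).image (fun x : H × N => (x.1 : G) * (x.2 : G)) : Finset G) : Set G) =
          MulAction.orbit A ((h : G) * n) := by
      intro h n K L hKo hLo
      ext y
      rw [Finset.mem_coe, memImg, mem_orbit_aut_iff]
      constructor
      · rintro ⟨k, hk, l, hl, rfl⟩
        have hk2 : k ∈ MulAction.orbit AH h := hKo ▸ Finset.mem_coe.mpr hk
        have hl2 : l ∈ MulAction.orbit AN n := hLo ▸ Finset.mem_coe.mpr hl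
        obtain ⟨α, hα, hαk⟩ := (mem_orbit_aut_iff AH h k).mp hk2
        obtain ⟨β, hβ, hβl⟩ := (mem_orbit_aut_iff AN n l).mp hl2
        obtain ⟨φ, hφrel⟩ := lift α β
        refine ⟨φ, ⟨α, hα, β, hβ, hφrel⟩, ?_⟩
        rw [hφrel h n, hαk, hβl]
      · rintro ⟨φ, ⟨α, hα, β, hβ, hrel⟩, rfl⟩
        refine ⟨α h, ?_, β n, ?_, (hrel h n).symm⟩
        · rw [← Finset.mem_coe, hKo]
          exact (mem_orbit_aut_iff AH h (α h)).mpr ⟨α, hα, rfl⟩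
        · rw [← Finset.mem_coe, hLo]
          exact (mem_orbit_aut_iff AN n (β n)).mpr ⟨β, hβ, rfl⟩
    refine ⟨A, fun S => ?_⟩
    rw [memP]
    constructor
    · rintro ⟨K, hK, L, hL, rfl⟩
      obtain ⟨h₀, hKo⟩ := (hAH K).mp hK
      obtain ⟨n₀, hLo⟩ := (hAN L).mp hL
      have hh₀ : h₀ ∈ K := by
        rw [← Finset.mem_coe, hKo]; exact MulAction.mem_orbit_self h₀
      have hn₀ : n₀ ∈ L := by
        rw [← Finset.mem_coe, hLo]; exact MulAction.mem_orbit_self n₀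
      exact ⟨(h₀ : G) * n₀, orbProd h₀ n₀ K L (orbKH K hK h₀ hh₀) (orbKN L hL n₀ hn₀)⟩
    · rintro ⟨g, hSo⟩
      obtain ⟨h, n, rfl⟩ := surj g
      obtain ⟨K, hK, hh⟩ := partH h
      obtain ⟨L, hL, hn⟩ := partN n
      have horb := orbProd h n K L (orbKH K hK h hh) (orbKN L hL n hn)
      rw [← horb] at hSo
      exact ⟨K, hK, L, hL, Finset.coe_injective hSo⟩
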